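/- With M and S the (N−1)×(N−1) mass and stiffness matrices, the last two rows of MS satisfy: (MS)_{(N−2)n} = δ_{(N−2)n} + (1/4)·√((2n+1)/(2N−3))·(n(n+1)/(2N−1))·(1+(−1)^{n+N}) and (MS)_{(N−1)n} = δ_{(N−1)n} + (1/4)·√((2n+1)/(2N−1))·(n(n+1)/(2N+1))·(1+(−1)^{n+N+1}) for 1 ≤ n ≤ N−1. -/

import Mathlib

open Polynomial

/-- The Legendre polynomial of degree `n` (Rodrigues formula). -/
noncomputable def legendre (n : ℕ) : Polynomial ℝ :=
  C ((1 : ℝ) / (2 ^ n * n.factorial)) * derivative^[n] ((X ^ 2 - 1) ^ n)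

/-- `ψ_{m+1}(ξ) = (1/√(2(2m+1))) (L_{m+1}(ξ) − L_{m−1}(ξ))`. -/
noncomputable def psiF (m : ℕ) (x : ℝ) : ℝ :=
  (Real.sqrt (2 * (2 * (m : ℝ) + 1)))⁻¹ *
    ((legendre (m + 1)).eval x - (legendre (m - 1)).eval x)

/-- The normalized Legendre function `φ_m(ξ) = √((2m+1)/2) L_m(ξ)`. -/
noncomputable def phiF (m : ℕ) (x : ℝ) : ℝ :=
  Real.sqrt ((2 * (m : ℝ) + 1) / 2) * (legendre m).eval x

/-- The `(N−1)×(N−1)` mass matrix `M_{mn} = ∫ ψ_{n+1} ψ_{m+1}`,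
with index `i : Fin (N−1)` corresponding to `m = i + 1`. -/
noncomputable def massMatrix (N : ℕ) : Matrix (Fin (N - 1)) (Fin (N - 1)) ℝ :=
  Matrix.of fun i j => ∫ x in (-1 : ℝ)..1, psiF ((j : ℕ) + 1) x * psiF ((i : ℕ) + 1) x

/-- The `(N−1)×(N−1)` stiffness matrix `S_{mn} = ∫ φ_n' φ_m'`. -/
noncomputable def stiffMatrix (N : ℕ) : Matrix (Fin (N - 1)) (Fin (N - 1)) ℝ :=
  Matrix.of fun i j =>
    ∫ x in (-1 : ℝ)..1, deriv (phiF ((j : ℕ) + 1)) x * deriv (phiF ((i : ℕ) + 1)) x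

open intervalIntegral
open scoped Nat


noncomputable def PI (p : ℝ[X]) : ℝ := ∫ x in (-1:ℝ)..1, p.eval x

lemma PI_add (p q : ℝ[X]) : PI (p + q) = PI p + PI q := by
  unfold PI
  simp only [eval_add]
  exact intervalIntegral.integral_add (p.continuous.intervalIntegrable _ _)
    (q.continuous.intervalIntegrable _ _)

lemma PI_C_mul (c : ℝ) (p : ℝ[X]) : PI (C c * p) = c * PI p := by
  unfold PI; simp only [eval_mul, eval_C, intervalIntegral.integral_const_mul]

lemma PI_neg (p : ℝ[X]) : PI (-p) = - PI p := by
  unfold PI; simp only [eval_neg, intervalIntegral.integral_neg]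

lemma PI_sub (p q : ℝ[X]) : PI (p - q) = PI p - PI q := by
  rw [sub_eq_add_neg, PI_add, PI_neg]; ring

lemma PI_zero : PI 0 = 0 := by unfold PI; simp

lemma PI_ibp (p q : ℝ[X]) :
    PI (p * derivative q) =
      p.eval 1 * q.eval 1 - p.eval (-1) * q.eval (-1) - PI (derivative p * q) := by
  unfold PI
  simp only [eval_mul]
  exact intervalIntegral.integral_mul_deriv_eq_deriv_mul
    (fun x _ => p.hasDerivAt x) (fun x _ => q.hasDerivAt x)
    ((p.derivative.continuous).intervalIntegrable _ _)
    ((q.derivative.continuous).intervalIntegrable _ _)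

/-- the Rodrigues core polynomial -/
noncomputable def Rod (n : ℕ) : ℝ[X] := ((X:ℝ[X]) ^ 2 - 1) ^ n

lemma Rod_eq (n : ℕ) : Rod n = (X - C 1) ^ n * (X + C 1) ^ n := by
  rw [Rod, ← mul_pow]; congr 1; simp; ring

lemma Rod_eq' (n : ℕ) : Rod n = (X - C (-1)) ^ n * (X - C 1) ^ n := by
  rw [Rod, ← mul_pow]; congr 1; simp; ring

lemma dvd_iter (a : ℝ) (n : ℕ) (q : ℝ[X]) :
    ∀ k, k ≤ n → (X - C a) ^ (n - k) ∣ derivative^[k] ((X - C a) ^ n * q) := by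
  intro k
  induction k with
  | zero => intro _; simpa using Dvd.intro q rfl
  | succ k ih =>
    intro hk
    obtain ⟨r, hr⟩ := ih (le_of_lt (Nat.lt_of_succ_le hk))
    rw [Function.iterate_succ_apply', hr, derivative_mul, derivative_pow]
    have h1 : n - k = (n - (k+1)) + 1 := by omega
    refine dvd_add ?_ ?_
    · rcases Nat.eq_zero_or_pos (n - k) with h | h
      · simp [h]
      · have : n - k - 1 = n - (k+1) := by omega
        rw [this]
        exact dvd_mul_of_dvd_left (dvd_mul_of_dvd_left (dvd_mul_left _ _) _) _
    · rw [h1, pow_succ]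
      exact Dvd.dvd.mul_right (dvd_mul_right _ _) _

lemma eval_iter_deriv_root (a : ℝ) (n k : ℕ) (q : ℝ[X]) (hk : k < n) :
    (derivative^[k] ((X - C a) ^ n * q)).eval a = 0 := by
  obtain ⟨r, hr⟩ := dvd_iter a n q k (le_of_lt hk)
  rw [hr]
  have : n - k ≠ 0 := by omega
  simp [this, zero_pow this]

lemma Rod_vanish_one (n k : ℕ) (hk : k < n) : (derivative^[k] (Rod n)).eval 1 = 0 := by
  rw [Rod_eq]; exact eval_iter_deriv_root 1 n k _ hk

lemma Rod_vanish_negone (n k : ℕ) (hk : k < n) : (derivative^[k] (Rod n)).eval (-1) = 0 := by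
  rw [Rod_eq']; exact eval_iter_deriv_root (-1) n k _ hk

lemma monic_X_sq_sub_one : ((X:ℝ[X]) ^ 2 - 1).Monic := by
  have := Polynomial.monic_X_pow_sub_C (1:ℝ) (n := 2) (by norm_num)
  simpa using this

lemma Rod_natDegree (n : ℕ) : (Rod n).natDegree = 2 * n := by
  rw [Rod, monic_X_sq_sub_one.natDegree_pow]
  have : ((X:ℝ[X]) ^ 2 - 1).natDegree = 2 := by
    simpa using (Polynomial.natDegree_X_pow_sub_C (n := 2) (r := (1:ℝ)))
  rw [this]; ring

lemma iter_deriv_of_monic {p : ℝ[X]} (d : ℕ) (hm : p.Monic) (hd : p.natDegree = d) :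
    derivative^[d] p = C (d ! : ℝ) := by
  have h0 : (derivative^[d] p).natDegree ≤ 0 := by
    have := p.natDegree_iterate_derivative d
    omega
  rw [Polynomial.eq_C_of_natDegree_le_zero h0, Polynomial.coeff_iterate_derivative]
  have : p.coeff (0 + d) = 1 := by
    rw [zero_add, ← hd]; exact hm.coeff_natDegree
  rw [this]
  simp [Nat.descFactorial_self]

lemma Rod_top_deriv (n : ℕ) : derivative^[2 * n] (Rod n) = C ((2 * n)! : ℝ) :=
  iter_deriv_of_monic _ (monic_X_sq_sub_one.pow n) (Rod_natDegree n)

lemma Rod_natDegree_iter (n k : ℕ) : (derivative^[k] (Rod n)).natDegree ≤ 2 * n - k := by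
  have := (Rod n).natDegree_iterate_derivative k
  rw [Rod_natDegree] at this; exact this

lemma PI_reduce (n : ℕ) (p : ℝ[X]) :
    ∀ j, j ≤ n → PI (p * derivative^[n] (Rod n)) =
      (-1) ^ j * PI (derivative^[j] p * derivative^[n - j] (Rod n)) := by
  intro j
  induction j with
  | zero => intro _; simp
  | succ j ih =>
    intro hj
    rw [ih (by omega)]
    have hnj : n - j = (n - (j + 1)) + 1 := by omega
    rw [hnj, Function.iterate_succ_apply', PI_ibp]
    have h1 : (derivative^[n - (j+1)] (Rod n)).eval 1 = 0 := Rod_vanish_one n _ (by omega)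
    have h2 : (derivative^[n - (j+1)] (Rod n)).eval (-1) = 0 := Rod_vanish_negone n _ (by omega)
    rw [h1, h2, ← Function.iterate_succ_apply' derivative j p]
    ring

lemma PI_Rod (n : ℕ) :
    PI (Rod n) = (-1) ^ n * 2 ^ (2 * n + 1) * (n ! : ℝ) ^ 2 / ((2 * n + 1)! : ℝ) := by
  induction n with
  | zero =>
    simp [Rod, PI]
    norm_num
  | succ n ih =>
    -- J(n+1) = - PI (derivative (Rod (n+1)) * X)
    have hibp := PI_ibp (Rod (n + 1)) X
    rw [derivative_X, mul_one] at hibp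
    have e1 : (Rod (n+1)).eval 1 = 0 := by simp [Rod]
    have e2 : (Rod (n+1)).eval (-1) = 0 := by simp [Rod]
    rw [e1, e2] at hibp
    have hd : derivative (Rod (n + 1)) * X = C ((2 : ℝ) * (n + 1)) * (Rod (n + 1) + Rod n) := by
      simp only [Rod]
      rw [derivative_pow]
      have hder : derivative ((X:ℝ[X]) ^ 2 - 1) = C 2 * X := by
        simp [derivative_X_pow]
        rw [← C_1, ← C_add]; norm_num
      rw [hder, show (n + 1 - 1) = n from rfl, pow_succ,
        show C ((2:ℝ) * (↑n + 1)) = C ((n:ℝ) + 1) * C 2 by rw [← C_mul]; ring_nf]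
      push_cast
      ring
    rw [hd, PI_C_mul, PI_add, ih] at hibp
    set A := PI (Rod (n + 1)) with hA
    set B := ((-1:ℝ)) ^ n * 2 ^ (2 * n + 1) * (n ! : ℝ) ^ 2 / ((2 * n + 1)! : ℝ) with hB
    have hfacpos : (0:ℝ) < ((2 * n + 1)! : ℝ) := by positivity
    have hAval : A = -(2 * ((n:ℝ) + 1)) * B / (2 * (n:ℝ) + 3) := by
      have h3 : (2 * (n:ℝ) + 3) ≠ 0 := by positivity
      field_simp
      linarith [hibp]
    have hfac : ((2 * (n + 1) + 1)! : ℝ) = (2*(n:ℝ)+3) * ((2*(n:ℝ)+2) * ((2 * n + 1)! : ℝ)) := by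
      have h : 2 * (n + 1) + 1 = (2 * n + 1) + 1 + 1 := by omega
      rw [h, Nat.factorial_succ, Nat.factorial_succ]
      push_cast; ring
    have h1 : ((n+1)! : ℝ) = ((n:ℝ)+1) * (n ! : ℝ) := by rw [Nat.factorial_succ]; push_cast; ring
    have hpow : (2:ℝ) ^ (2 * (n + 1) + 1) = 2 ^ (2 * n + 1) * 4 := by
      rw [show 2 * (n + 1) + 1 = (2 * n + 1) + 2 by omega, pow_add]; norm_num
    rw [hAval, hB, hfac, h1, hpow, pow_succ]
    have h3 : (2 * (n:ℝ) + 3) ≠ 0 := by positivity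
    field_simp
    ring

lemma legendre_def (n : ℕ) :
    legendre n = C ((1 : ℝ) / (2 ^ n * n !)) * derivative^[n] (Rod n) := rfl

lemma legendre_natDegree_le (n : ℕ) : (legendre n).natDegree ≤ n := by
  rw [legendre_def]
  refine le_trans (natDegree_C_mul_le _ _) ?_
  have := Rod_natDegree_iter n n
  omega

lemma iterate_derivative_C_mul' (c : ℝ) (p : ℝ[X]) (k : ℕ) :
    derivative^[k] (C c * p) = C c * derivative^[k] p := by
  induction k with
  | zero => rfl
  | succ k ih => rw [Function.iterate_succ_apply', ih, derivative_C_mul,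
      Function.iterate_succ_apply']

/-- key orthogonality tool: `∫ p Lₙ = 0` whenever `deg p < n`. -/
lemma PI_mul_legendre_eq_zero (p : ℝ[X]) (n : ℕ) (h : p.natDegree < n) :
    PI (p * legendre n) = 0 := by
  rw [legendre_def, show p * (C ((1 : ℝ) / (2 ^ n * n !)) * derivative^[n] (Rod n)) =
      C ((1 : ℝ) / (2 ^ n * n !)) * (p * derivative^[n] (Rod n)) by ring, PI_C_mul,
    PI_reduce n p n le_rfl, Polynomial.iterate_derivative_eq_zero h]
  simp [PI_zero]

lemma fact_ne (n : ℕ) : ((n ! : ℝ)) ≠ 0 := by positivity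

lemma PI_legendre_self (n : ℕ) : PI (legendre n * legendre n) = 2 / (2 * (n:ℝ) + 1) := by
  rw [legendre_def, mul_mul_mul_comm, ← C_mul, PI_C_mul,
    PI_reduce n _ n le_rfl, ← Function.iterate_add_apply, Nat.sub_self,
    show n + n = 2 * n by ring, Rod_top_deriv, Function.iterate_zero_apply, PI_C_mul, PI_Rod]
  have h1 : ((2*n+1)! : ℝ) = (2*(n:ℝ)+1) * ((2*n)! : ℝ) := by
    rw [Nat.factorial_succ]; push_cast; ring
  have h2 : (0:ℝ) < (2*(n:ℝ)+1) := by positivity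
  have h4 : ((2*n)! : ℝ) ≠ 0 := fact_ne _
  have h5 : ((n)! : ℝ) ≠ 0 := fact_ne _
  have h6 : (2:ℝ) ^ (2*n+1) = (2^n * 2^n) * 2 := by
    rw [show 2*n+1 = n + n + 1 by ring, pow_succ, pow_add]
  rw [h1, h6]
  field_simp
  ring_nf
  simp [show ((-1:ℝ))^(n*2) = 1 from by rw [mul_comm, pow_mul]; norm_num]

lemma PI_legendre_mul (m n : ℕ) :
    PI (legendre m * legendre n) = if m = n then 2 / (2 * (n:ℝ) + 1) else 0 := by
  rcases lt_trichotomy m n with h | h | h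
  · rw [if_neg h.ne]
    exact PI_mul_legendre_eq_zero _ n (lt_of_le_of_lt (legendre_natDegree_le m) h)
  · rw [if_pos h, h, PI_legendre_self]
  · rw [if_neg h.ne', mul_comm]
    exact PI_mul_legendre_eq_zero _ m (lt_of_le_of_lt (legendre_natDegree_le n) h)

lemma eval_iter_root_pow (a : ℝ) (n k : ℕ) (hk : k < n) :
    (derivative^[k] ((X - C a) ^ n)).eval a = 0 := by
  have := eval_iter_deriv_root a n k 1 hk
  simpa using this

lemma iter_deriv_linpow (a : ℝ) (n : ℕ) :
    derivative^[n] ((X - C a) ^ n) = C (n ! : ℝ) := by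
  refine iter_deriv_of_monic n ((monic_X_sub_C a).pow n) ?_
  rw [(monic_X_sub_C a).natDegree_pow, natDegree_X_sub_C, mul_one]

lemma evalGen_n (a b : ℝ) (n : ℕ) :
    (derivative^[n] ((X - C a) ^ n * (X - C b) ^ n)).eval a = (n ! : ℝ) * (a - b) ^ n := by
  rw [Polynomial.iterate_derivative_mul, eval_finset_sum]
  rw [Finset.sum_eq_single_of_mem 0 (Finset.mem_range.2 (by omega))]
  · simp [iter_deriv_linpow]
  · intro k hk hk0
    rw [Finset.mem_range] at hk
    rw [eval_smul, eval_mul, eval_iter_root_pow a n (n - k) (by omega)]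
    simp

lemma evalGen_succ (a b : ℝ) (n : ℕ) (hab : a ≠ b) :
    (derivative^[n + 1] ((X - C a) ^ n * (X - C b) ^ n)).eval a
      = ((n + 1)! : ℝ) * n * (a - b) ^ n / (a - b) := by
  rw [Polynomial.iterate_derivative_mul, eval_finset_sum]
  rw [Finset.sum_eq_single_of_mem 1 (Finset.mem_range.2 (by omega))]
  · rw [show n + 1 - 1 = n from rfl, iter_deriv_linpow, Function.iterate_one, derivative_pow]
    have hd : derivative (X - C b) = (1 : ℝ[X]) := by simp
    rw [hd, Nat.choose_one_right]
    rcases Nat.eq_zero_or_pos n with h0 | h1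
    · subst h0; simp
    · have : n - 1 + 1 = n := by omega
      rw [eval_smul, eval_mul, eval_mul, eval_C, eval_mul]
      simp only [eval_C, eval_pow, eval_sub, eval_X, eval_one, mul_one]
      rw [show (a - b) ^ n = (a - b) ^ (n - 1) * (a - b) by rw [← pow_succ, this]]
      rw [Nat.factorial_succ]
      have : (a - b) ≠ 0 := sub_ne_zero.2 hab
      push_cast
      field_simp
      ring
  · intro k hk hk0
    rw [Finset.mem_range] at hk
    rcases Nat.eq_zero_or_pos k with h0 | h1
    · subst h0
      have : (derivative^[n+1] ((X - C a) ^ n)) = 0 :=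
        Polynomial.iterate_derivative_eq_zero (by
          rw [(monic_X_sub_C a).natDegree_pow, natDegree_X_sub_C, mul_one]; omega)
      simp [this]
    · rw [eval_smul, eval_mul, eval_iter_root_pow a n (n + 1 - k) (by omega)]
      simp

lemma Rod_eq_gen (n : ℕ) : Rod n = (X - C 1) ^ n * (X - C (-1)) ^ n := by
  rw [Rod_eq]; congr 2; simp [sub_neg_eq_add, map_neg]

lemma Rod_eq_gen' (n : ℕ) : Rod n = (X - C (-1)) ^ n * (X - C 1) ^ n := by
  rw [Rod_eq_gen]; ring

lemma two_pow_fact_ne (n : ℕ) : ((2:ℝ) ^ n * (n ! : ℝ)) ≠ 0 := by positivity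

lemma legendre_eval_one (n : ℕ) : (legendre n).eval 1 = 1 := by
  rw [legendre_def, eval_mul, eval_C, Rod_eq_gen, evalGen_n]
  rw [show (1 : ℝ) - (-1) = 2 by norm_num]
  field_simp

lemma legendre_eval_negone (n : ℕ) : (legendre n).eval (-1) = (-1) ^ n := by
  rw [legendre_def, eval_mul, eval_C, Rod_eq_gen', evalGen_n]
  rw [show (-1 : ℝ) - 1 = -2 by norm_num, show ((-2:ℝ)) ^ n = (-1)^n * 2^n by
    rw [← neg_one_mul, mul_pow]]
  field_simp

lemma dlegendre_eval_one (n : ℕ) :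
    (derivative (legendre n)).eval 1 = (n:ℝ) * (n + 1) / 2 := by
  rw [legendre_def, derivative_C_mul, eval_mul, eval_C,
    ← Function.iterate_succ_apply' derivative n, Rod_eq_gen, evalGen_succ _ _ _ (by norm_num)]
  rw [show (1 : ℝ) - (-1) = 2 by norm_num, Nat.factorial_succ]
  push_cast
  field_simp

lemma dlegendre_eval_negone (n : ℕ) :
    (derivative (legendre n)).eval (-1) = -((-1):ℝ) ^ n * ((n:ℝ) * (n + 1) / 2) := by
  rw [legendre_def, derivative_C_mul, eval_mul, eval_C,
    ← Function.iterate_succ_apply' derivative n, Rod_eq_gen', evalGen_succ _ _ _ (by norm_num)]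
  rw [show (-1 : ℝ) - 1 = -2 by norm_num, show ((-2:ℝ)) ^ n = (-1)^n * 2^n by
    rw [← neg_one_mul, mul_pow], Nat.factorial_succ]
  push_cast
  field_simp

lemma PI_dlegendre_mul (m n : ℕ) (hm : 1 ≤ m) (hmn : m ≤ n) :
    PI (derivative (legendre m) * derivative (legendre n)) =
      ((m:ℝ) * (m + 1) / 2) * (1 + (-1:ℝ) ^ (m + n)) := by
  rw [PI_ibp]
  have hz : PI (derivative (derivative (legendre m)) * legendre n) = 0 := by
    refine PI_mul_legendre_eq_zero _ n ?_
    have h1 := natDegree_derivative_le (derivative (legendre m))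
    have h2 := natDegree_derivative_le (legendre m)
    have h3 := legendre_natDegree_le m
    omega
  rw [hz, dlegendre_eval_one, dlegendre_eval_negone, legendre_eval_one, legendre_eval_negone,
    pow_add]
  ring

lemma deriv_phiF (m : ℕ) (x : ℝ) :
    deriv (phiF m) x = Real.sqrt ((2 * (m:ℝ) + 1) / 2) * (derivative (legendre m)).eval x := by
  have h : HasDerivAt (phiF m)
      (Real.sqrt ((2 * (m:ℝ) + 1) / 2) * (derivative (legendre m)).eval x) x :=
    (((legendre m).hasDerivAt x).const_mul (Real.sqrt ((2 * (m:ℝ) + 1) / 2)))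
  exact h.deriv

lemma stiff_entry (N : ℕ) (k j : Fin (N - 1)) :
    stiffMatrix N k j =
      Real.sqrt ((2 * ((j:ℕ):ℝ) + 3) / 2) * Real.sqrt ((2 * ((k:ℕ):ℝ) + 3) / 2) *
        PI (derivative (legendre ((j:ℕ) + 1)) * derivative (legendre ((k:ℕ) + 1))) := by
  have key : ∀ x : ℝ, deriv (phiF ((j:ℕ) + 1)) x * deriv (phiF ((k:ℕ) + 1)) x =
      Real.sqrt ((2 * ((j:ℕ):ℝ) + 3) / 2) * Real.sqrt ((2 * ((k:ℕ):ℝ) + 3) / 2) *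
      (derivative (legendre ((j:ℕ) + 1)) * derivative (legendre ((k:ℕ) + 1))).eval x := by
    intro x
    rw [deriv_phiF, deriv_phiF, eval_mul]
    push_cast
    ring
  show (∫ x in (-1:ℝ)..1, deriv (phiF ((j:ℕ) + 1)) x * deriv (phiF ((k:ℕ) + 1)) x) = _
  simp only [key, intervalIntegral.integral_const_mul]
  rfl

lemma mass_entry (N : ℕ) (i k : Fin (N - 1)) :
    massMatrix N i k =
      (Real.sqrt (2 * (2 * ((k:ℕ):ℝ) + 3)))⁻¹ * (Real.sqrt (2 * (2 * ((i:ℕ):ℝ) + 3)))⁻¹ *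
        PI ((legendre ((k:ℕ) + 2) - legendre (k:ℕ)) * (legendre ((i:ℕ) + 2) - legendre (i:ℕ))) := by
  have key : ∀ x : ℝ, psiF ((k:ℕ) + 1) x * psiF ((i:ℕ) + 1) x =
      (Real.sqrt (2 * (2 * ((k:ℕ):ℝ) + 3)))⁻¹ * (Real.sqrt (2 * (2 * ((i:ℕ):ℝ) + 3)))⁻¹ *
      ((legendre ((k:ℕ) + 2) - legendre (k:ℕ)) * (legendre ((i:ℕ) + 2) - legendre (i:ℕ))).eval x := by
    intro x
    simp only [psiF, Nat.add_sub_cancel, eval_mul, eval_sub]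
    push_cast
    ring
  show (∫ x in (-1:ℝ)..1, psiF ((k:ℕ) + 1) x * psiF ((i:ℕ) + 1) x) = _
  simp only [key, intervalIntegral.integral_const_mul]
  rfl

lemma PI_sub_mul_sub (p q r s : ℝ[X]) :
    PI ((p - q) * (r - s)) = PI (p * r) - PI (p * s) - PI (q * r) + PI (q * s) := by
  have h : (p - q) * (r - s) = p * r - p * s - (q * r - q * s) := by ring
  rw [h, PI_sub, PI_sub, PI_sub]
  ring

lemma PI_psi_core (a b : ℕ) :
    PI ((legendre (b + 2) - legendre b) * (legendre (a + 2) - legendre a)) =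
      (if b = a then 2 / (2 * (a:ℝ) + 5) + 2 / (2 * (a:ℝ) + 1) else 0)
      - (if b + 2 = a then 2 / (2 * (a:ℝ) + 1) else 0)
      - (if b = a + 2 then 2 / (2 * (a:ℝ) + 5) else 0) := by
  rw [PI_sub_mul_sub, PI_legendre_mul, PI_legendre_mul, PI_legendre_mul, PI_legendre_mul]
  split_ifs <;> first
  | (exfalso; omega)
  | (push_cast; ring)

lemma PI_dd (p q : ℕ) (hp : 1 ≤ p) (hq : 1 ≤ q) :
    PI (derivative (legendre p) * derivative (legendre q)) =
      ((min p q : ℕ):ℝ) * (((min p q : ℕ):ℝ) + 1) / 2 * (1 + (-1:ℝ) ^ (p + q)) := by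
  rcases le_total p q with h | h
  · rw [PI_dlegendre_mul p q hp h, Nat.min_eq_left h]
  · rw [mul_comm, PI_dlegendre_mul q p hq h, Nat.min_eq_right h, Nat.add_comm q p]

lemma mass_vanish (N : ℕ) (i k : Fin (N - 1)) (h1 : (k:ℕ) ≠ (i:ℕ))
    (h2 : (k:ℕ) + 2 ≠ (i:ℕ)) (h3 : (k:ℕ) ≠ (i:ℕ) + 2) :
    massMatrix N i k = 0 := by
  rw [mass_entry, PI_psi_core, if_neg h1, if_neg h2, if_neg h3]
  ring

set_option maxHeartbeats 2000000 in
lemma MS_row (N : ℕ) (hN : 4 ≤ N) (i j : Fin (N - 1)) (hi : N ≤ (i:ℕ) + 3) :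
    (massMatrix N * stiffMatrix N) i j =
      (if i = j then 1 else 0) +
        1 / 4 * Real.sqrt ((2 * ((j:ℕ):ℝ) + 3) / (2 * ((i:ℕ):ℝ) + 3)) *
          ((((j:ℕ):ℝ) + 1) * (((j:ℕ):ℝ) + 2) / (2 * ((i:ℕ):ℝ) + 5)) *
          (1 + (-1:ℝ) ^ ((j:ℕ) + (i:ℕ))) := by
  have hiN : (i:ℕ) < N - 1 := i.isLt
  have hjN : (j:ℕ) < N - 1 := j.isLt
  rw [Matrix.mul_apply]
  by_cases h2 : 2 ≤ (i:ℕ)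
  · -- two terms: k = i and k = i - 2
    set k2 : Fin (N - 1) := ⟨(i:ℕ) - 2, by omega⟩ with hk2
    have hval2 : (k2:ℕ) = (i:ℕ) - 2 := rfl
    have hne : i ≠ k2 := by
      intro h
      have := congrArg (Fin.val) h
      rw [hval2] at this
      omega
    have hsum : ∑ k, massMatrix N i k * stiffMatrix N k j =
        massMatrix N i i * stiffMatrix N i j + massMatrix N i k2 * stiffMatrix N k2 j := by
      rw [← Finset.sum_pair (f := fun k => massMatrix N i k * stiffMatrix N k j) hne]
      refine (Finset.sum_subset (Finset.subset_univ _) ?_).symm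
      intro k _ hk
      simp only [Finset.mem_insert, Finset.mem_singleton, not_or] at hk
      have hki : (k:ℕ) ≠ (i:ℕ) := fun h => hk.1 (Fin.ext h)
      have hkk2 : (k:ℕ) ≠ (i:ℕ) - 2 := fun h => hk.2 (Fin.ext h)
      rw [mass_vanish N i k hki (by omega) (by omega)]
      ring
    rw [hsum]
    rw [mass_entry, mass_entry, stiff_entry, stiff_entry, hval2, PI_psi_core, PI_psi_core]
    rw [if_pos rfl, if_neg (by omega), if_neg (by omega),
        if_neg (by omega : ¬((i:ℕ) - 2 = (i:ℕ))), if_pos (by omega), if_neg (by omega)]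
    rw [PI_dd ((j:ℕ)+1) ((i:ℕ)+1) (by omega) (by omega),
        PI_dd ((j:ℕ)+1) (((i:ℕ)-2)+1) (by omega) (by omega)]
    have hcast2 : (((i:ℕ) - 2 : ℕ) : ℝ) = ((i:ℕ):ℝ) - 2 := by
      rw [Nat.cast_sub h2]; norm_num
    have he1 : ((-1:ℝ)) ^ ((j:ℕ) + 1 + ((i:ℕ) + 1)) = (-1:ℝ) ^ ((j:ℕ) + (i:ℕ)) := by
      rw [show (j:ℕ) + 1 + ((i:ℕ) + 1) = ((j:ℕ) + (i:ℕ)) + 2 by omega, pow_add]; norm_num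
    have he2 : ((-1:ℝ)) ^ ((j:ℕ) + 1 + ((i:ℕ) - 2 + 1)) = (-1:ℝ) ^ ((j:ℕ) + (i:ℕ)) := by
      rw [show (j:ℕ) + 1 + ((i:ℕ) - 2 + 1) = (j:ℕ) + (i:ℕ) by omega]
    rw [he1, he2, hcast2]
    rcases Nat.even_or_odd ((j:ℕ) + (i:ℕ)) with hpar | hpar
    · -- even parity
      have he : ((-1:ℝ)) ^ ((j:ℕ) + (i:ℕ)) = 1 := Even.neg_one_pow hpar
      rw [he]
      obtain ⟨c, hc⟩ := hpar
      set ar : ℝ := ((i:ℕ):ℝ) with har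
      set jr : ℝ := ((j:ℕ):ℝ) with hjr
      have har2 : (2:ℝ) ≤ ar := by rw [har]; exact_mod_cast h2
      have hjr0 : (0:ℝ) ≤ jr := by positivity
      have hsa : Real.sqrt (2 * (2 * ar + 3)) = Real.sqrt 2 * Real.sqrt (2 * ar + 3) :=
        Real.sqrt_mul (by norm_num) _
      have hs4 : Real.sqrt (2 * (2 * (ar - 2) + 3)) =
          Real.sqrt 2 * Real.sqrt (2 * (ar - 2) + 3) := Real.sqrt_mul (by norm_num) _
      have hda : Real.sqrt ((2 * ar + 3) / 2) = Real.sqrt (2 * ar + 3) / Real.sqrt 2 :=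
        Real.sqrt_div (by linarith) 2
      have hd4 : Real.sqrt ((2 * (ar - 2) + 3) / 2) =
          Real.sqrt (2 * (ar - 2) + 3) / Real.sqrt 2 := Real.sqrt_div (by linarith) 2
      have hdj : Real.sqrt ((2 * jr + 3) / 2) = Real.sqrt (2 * jr + 3) / Real.sqrt 2 :=
        Real.sqrt_div (by linarith) 2
      have hdr : Real.sqrt ((2 * jr + 3) / (2 * ar + 3)) =
          Real.sqrt (2 * jr + 3) / Real.sqrt (2 * ar + 3) :=
        Real.sqrt_div (by linarith) _
      have hsa0 : (0:ℝ) < Real.sqrt (2 * ar + 3) := Real.sqrt_pos.2 (by linarith)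
      have hs40 : (0:ℝ) < Real.sqrt (2 * (ar - 2) + 3) := Real.sqrt_pos.2 (by linarith)
      have hsj0 : (0:ℝ) ≤ Real.sqrt (2 * jr + 3) := Real.sqrt_nonneg _
      have h20 : (0:ℝ) < Real.sqrt 2 := Real.sqrt_pos.2 (by norm_num)
      have h22 : Real.sqrt 2 * Real.sqrt 2 = 2 := Real.mul_self_sqrt (by norm_num)
      by_cases hij : (j:ℕ) = (i:ℕ)
      · -- diagonal: n = a + 1
        have hijF : i = j := Fin.ext hij.symm
        rw [if_pos hijF]
        have hjra : jr = ar := by rw [hjr, har, hij]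
        have hmin1 : min ((j:ℕ)+1) ((i:ℕ)+1) = (i:ℕ)+1 := by omega
        have hmin2 : min ((j:ℕ)+1) ((i:ℕ)-2+1) = (i:ℕ)-2+1 := by omega
        rw [hmin1, hmin2, hjra]
        push_cast [Nat.cast_sub h2]
        rw [← har]
        rw [hsa, hs4, hda, hd4]
        rw [div_self (by linarith : (2*ar+3) ≠ 0), Real.sqrt_one]
        have hp2 : (Real.sqrt 2)^2 = 2 := Real.sq_sqrt (by norm_num)
        have hp4 : (Real.sqrt 2)^4 = 4 := by
          rw [show ((Real.sqrt 2)^4) = ((Real.sqrt 2)^2)^2 by ring, hp2]; norm_num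
        have hA3 : Real.sqrt (3 + ar * 2) ^ 3 = (3 + ar * 2) * Real.sqrt (3 + ar * 2) := by
          rw [pow_succ, Real.sq_sqrt (by linarith)]
        have hB3 : Real.sqrt (-1 + ar * 2) ^ 3 = (-1 + ar * 2) * Real.sqrt (-1 + ar * 2) := by
          rw [pow_succ, Real.sq_sqrt (by linarith)]
        have hJ3 : Real.sqrt (3 + jr * 2) ^ 3 = (3 + jr * 2) * Real.sqrt (3 + jr * 2) := by
          rw [pow_succ, Real.sq_sqrt (by linarith)]
        field_simp
        ring_nf
        simp only [hp2, hp4, hA3, hB3, hJ3]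
        ring
      · -- off-diagonal: n ≤ a - 1
        have hijF : ¬ (i = j) := fun h => hij (congrArg Fin.val h).symm
        rw [if_neg hijF]
        have hjlow : (j:ℕ) + 2 ≤ (i:ℕ) := by omega
        have hmin1 : min ((j:ℕ)+1) ((i:ℕ)+1) = (j:ℕ)+1 := by omega
        have hmin2 : min ((j:ℕ)+1) ((i:ℕ)-2+1) = (j:ℕ)+1 := by omega
        rw [hmin1, hmin2]
        push_cast
        simp only [← hjr, ← har]
        rw [hsa, hs4, hda, hd4, hdj, hdr]
        have hp2 : (Real.sqrt 2)^2 = 2 := Real.sq_sqrt (by norm_num)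
        have hp4 : (Real.sqrt 2)^4 = 4 := by
          rw [show ((Real.sqrt 2)^4) = ((Real.sqrt 2)^2)^2 by ring, hp2]; norm_num
        have hA3 : Real.sqrt (3 + ar * 2) ^ 3 = (3 + ar * 2) * Real.sqrt (3 + ar * 2) := by
          rw [pow_succ, Real.sq_sqrt (by linarith)]
        have hB3 : Real.sqrt (-1 + ar * 2) ^ 3 = (-1 + ar * 2) * Real.sqrt (-1 + ar * 2) := by
          rw [pow_succ, Real.sq_sqrt (by linarith)]
        have hJ3 : Real.sqrt (3 + jr * 2) ^ 3 = (3 + jr * 2) * Real.sqrt (3 + jr * 2) := by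
          rw [pow_succ, Real.sq_sqrt (by linarith)]
        field_simp
        ring_nf
        simp only [hp2, hp4, hA3, hB3, hJ3]
        ring
    · -- odd parity : everything vanishes
      have ho : ((-1:ℝ)) ^ ((j:ℕ) + (i:ℕ)) = -1 := Odd.neg_one_pow hpar
      have hijF : ¬ (i = j) := by
        intro h
        obtain ⟨c, hc⟩ := hpar
        have : (j:ℕ) = (i:ℕ) := congrArg Fin.val h.symm
        omega
      rw [ho, if_neg hijF]
      ring
  · -- N = 4, (i:ℕ) = 1 : single term k = i
    have hi1 : (i:ℕ) = 1 := by omega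
    have hN4 : N = 4 := by omega
    have hsum : ∑ k, massMatrix N i k * stiffMatrix N k j =
        massMatrix N i i * stiffMatrix N i j := by
      refine Finset.sum_eq_single i ?_ (by simp)
      intro k _ hk
      have hki : (k:ℕ) ≠ (i:ℕ) := fun h => hk (Fin.ext h)
      rw [mass_vanish N i k hki (by omega) (by omega)]
      ring
    rw [hsum]
    rw [mass_entry, stiff_entry, PI_psi_core,
        if_pos rfl, if_neg (by omega), if_neg (by omega),
        PI_dd ((j:ℕ)+1) ((i:ℕ)+1) (by omega) (by omega)]
    have hj012 : (j:ℕ) = 0 ∨ (j:ℕ) = 1 ∨ (j:ℕ) = 2 := by omega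
    have h52 : Real.sqrt ((5:ℝ)/2) * Real.sqrt ((5:ℝ)/2) = 5/2 :=
      Real.mul_self_sqrt (by norm_num)
    have h10 : (Real.sqrt (10:ℝ))⁻¹ * (Real.sqrt (10:ℝ))⁻¹ = 1/10 := by
      rw [← mul_inv, Real.mul_self_sqrt (by norm_num)]
      norm_num
    rcases hj012 with hj | hj | hj
    · have hijF : ¬ i = j := by
        intro h
        have := congrArg Fin.val h.symm
        omega
      rw [if_neg hijF]
      simp only [hi1, hj]
      norm_num
    · have hijF : i = j := Fin.ext (by omega)
      rw [if_pos hijF]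
      simp only [hi1, hj]
      norm_num [h52, h10]
      have h5 : Real.sqrt (5:ℝ) * Real.sqrt 5 = 5 := Real.mul_self_sqrt (by norm_num)
      have h2' : Real.sqrt (2:ℝ) * Real.sqrt 2 = 2 := Real.mul_self_sqrt (by norm_num)
      rw [div_mul_div_comm, h5, h2']
      norm_num
    · have hijF : ¬ i = j := by
        intro h
        have := congrArg Fin.val h.symm
        omega
      rw [if_neg hijF]
      simp only [hi1, hj]
      norm_num

/-- The last two rows of `MS`: for `1 ≤ n ≤ N−1`,
`(MS)_{(N−2)n} = δ_{(N−2)n} + (1/4)√((2n+1)/(2N−3))(n(n+1)/(2N−1))(1+(−1)^{n+N})` and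
`(MS)_{(N−1)n} = δ_{(N−1)n} + (1/4)√((2n+1)/(2N−1))(n(n+1)/(2N+1))(1+(−1)^{n+N+1})`. -/
theorem mass_stiff_last_rows (N : ℕ) (hN : 4 ≤ N) (i j : Fin (N - 1)) :
    ((i : ℕ) + 1 = N - 2 →
      (massMatrix N * stiffMatrix N) i j =
        (if i = j then 1 else 0) +
          1 / 4 * Real.sqrt ((2 * ((j : ℕ) : ℝ) + 3) / (2 * (N : ℝ) - 3)) *
            ((((j : ℕ) : ℝ) + 1) * (((j : ℕ) : ℝ) + 2) / (2 * (N : ℝ) - 1)) *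
            (1 + (-1 : ℝ) ^ ((j : ℕ) + 1 + N))) ∧
    ((i : ℕ) + 1 = N - 1 →
      (massMatrix N * stiffMatrix N) i j =
        (if i = j then 1 else 0) +
          1 / 4 * Real.sqrt ((2 * ((j : ℕ) : ℝ) + 3) / (2 * (N : ℝ) - 1)) *
            ((((j : ℕ) : ℝ) + 1) * (((j : ℕ) : ℝ) + 2) / (2 * (N : ℝ) + 1)) *
            (1 + (-1 : ℝ) ^ ((j : ℕ) + 1 + N + 1))) := by
  constructor
  · intro h
    have ha : (i:ℕ) = N - 3 := by omega
    rw [MS_row N hN i j (by omega)]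
    have hc : ((i:ℕ):ℝ) = (N:ℝ) - 3 := by
      rw [ha]; push_cast [Nat.cast_sub (by omega : 3 ≤ N)]; ring
    have hp : ((-1:ℝ)) ^ ((j:ℕ) + (i:ℕ)) = (-1:ℝ) ^ ((j:ℕ) + 1 + N) := by
      rw [show (j:ℕ) + 1 + N = ((j:ℕ) + (i:ℕ)) + 4 by omega,
        pow_add (-1:ℝ) ((j:ℕ) + (i:ℕ)) 4]; norm_num
    rw [hc, hp, show 2 * ((N:ℝ) - 3) + 3 = 2 * (N:ℝ) - 3 by ring,
        show 2 * ((N:ℝ) - 3) + 5 = 2 * (N:ℝ) - 1 by ring]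
  · intro h
    have ha : (i:ℕ) = N - 2 := by omega
    rw [MS_row N hN i j (by omega)]
    have hc : ((i:ℕ):ℝ) = (N:ℝ) - 2 := by
      rw [ha]; push_cast [Nat.cast_sub (by omega : 2 ≤ N)]; ring
    have hp : ((-1:ℝ)) ^ ((j:ℕ) + (i:ℕ)) = (-1:ℝ) ^ ((j:ℕ) + 1 + N + 1) := by
      rw [show (j:ℕ) + 1 + N + 1 = ((j:ℕ) + (i:ℕ)) + 4 by omega,
        pow_add (-1:ℝ) ((j:ℕ) + (i:ℕ)) 4]; norm_num
    rw [hc, hp, show 2 * ((N:ℝ) - 2) + 3 = 2 * (N:ℝ) - 1 by ring,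
        show 2 * ((N:ℝ) - 2) + 5 = 2 * (N:ℝ) + 1 by ring]
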